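/- For all real x > 1, (√x - 1)/(√x + 1) ≥ exp(-2/√(x-1)). -/

import Mathlib

theorem stmt_4 (x : ℝ) (hx : 1 < x) :
    (Real.sqrt x - 1) / (Real.sqrt x + 1) ≥ Real.exp (-2 / Real.sqrt (x - 1)) := by
  set s := Real.sqrt x with hs
  set w := Real.sqrt (x - 1) with hwdef
  have hw : 0 < w := Real.sqrt_pos.mpr (by linarith)
  have hs1 : 1 < s := by
    rw [hs, show (1:ℝ) = Real.sqrt 1 by simp]
    exact Real.sqrt_lt_sqrt (by norm_num) hx
  have hsx : s ^ 2 = x := Real.sq_sqrt (by linarith)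
  have hwx : w ^ 2 = x - 1 := Real.sq_sqrt (by linarith)
  set t := 1 / w with ht
  have htpos : 0 < t := by positivity
  -- arsinh t ≤ t
  have harsinh : Real.arsinh t ≤ t := by
    have h1 : t ≤ Real.sinh t := Real.self_le_sinh_iff.mpr htpos.le
    calc Real.arsinh t ≤ Real.arsinh (Real.sinh t) := Real.arsinh_le_arsinh.mpr h1
      _ = t := Real.arsinh_sinh t
  have hexp : t + Real.sqrt (1 + t ^ 2) ≤ Real.exp t := by
    rw [← Real.exp_arsinh]
    exact Real.exp_le_exp.mpr harsinh
  -- √(1+t²) = s / w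
  have hsq : Real.sqrt (1 + t ^ 2) = s / w := by
    rw [show (1 : ℝ) + t ^ 2 = (s / w) ^ 2 by
      rw [ht, div_pow, div_pow, hsx, hwx, one_pow]
      have h1 : x - 1 ≠ 0 := by linarith
      field_simp
      ring]
    exact Real.sqrt_sq (by positivity)
  have hkey : (1 + s) / w ≤ Real.exp t := by
    rw [hsq] at hexp
    calc (1 + s) / w = t + s / w := by rw [ht]; field_simp
      _ ≤ Real.exp t := hexp
  -- square it
  have hkey2 : (s + 1) / (s - 1) ≤ Real.exp (2 / w) := by
    have h2 : ((1 + s) / w) ^ 2 ≤ (Real.exp t) ^ 2 := by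
      have hnn : (0:ℝ) ≤ (1 + s) / w := by positivity
      exact pow_le_pow_left₀ hnn hkey 2
    have heq : ((1 + s) / w) ^ 2 = (s + 1) / (s - 1) := by
      rw [div_pow, hwx, ← hsx]
      rw [show s ^ 2 - 1 = (s - 1) * (s + 1) by ring,
        show (1 + s) ^ 2 = (s + 1) * (s + 1) by ring]
      rw [mul_div_mul_right _ _ (by linarith : s + 1 ≠ 0)]
    have hexp2 : (Real.exp t) ^ 2 = Real.exp (2 / w) := by
      rw [← Real.exp_nat_mul]
      norm_num [ht]
      ring_nf
    rw [heq, hexp2] at h2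
    exact h2
  have hpos : (0:ℝ) < (s + 1) / (s - 1) := by
    apply div_pos <;> linarith
  rw [ge_iff_le, show (-2:ℝ) / w = -(2 / w) by ring, Real.exp_neg]
  calc (Real.exp (2 / w))⁻¹ ≤ ((s + 1) / (s - 1))⁻¹ :=
        inv_anti₀ hpos hkey2
    _ = (s - 1) / (s + 1) := by rw [inv_div]
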